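/- Let g = sl_r, and let A be a commutative subalgebra of U(sl_r) acting on an irreducible finite-dimensional sl_r-module V_λ with simple spectrum (a cyclic family of commuting diagonalizable operators with one-dimensional joint eigenspaces). If A lies in the closure of a family A_μ of commutative subalgebras (in the sense that A = lim_{t→0} A_{μ(t)} along a curve μ(t), with limits taken in finite-dimensional filtration pieces), then for generic μ the algebra A_μ also has simple spectrum on V_λ. (Simplicity of spectrum is a Zariski-open condition on the family.) -/

import Mathlib

open Filter

/-- A subalgebra `S` of operators (matrices) has *simple spectrum* on `ℂ^d` if it is
simultaneously diagonalizable in some basis with pairwise distinct joint eigenvalue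
characters, i.e. all joint eigenspaces are one-dimensional. -/
def HasSimpleSpectrum {d : ℕ} (S : Subalgebra ℂ (Matrix (Fin d) (Fin d) ℂ)) : Prop :=
  ∃ (b : Module.Basis (Fin d) ℂ (Fin d → ℂ)) (χ : Fin d → (S → ℂ)),
    (∀ (a : S) (i : Fin d), (a : Matrix (Fin d) (Fin d) ℂ).mulVec (b i) = χ i a • b i)
      ∧ Function.Injective χ

namespace Stmt17Aux

open Module Set

noncomputable section

variable {d : ℕ}

/-- The endomorphism of `ℂ^d` attached to a matrix. -/
def endo (M : Matrix (Fin d) (Fin d) ℂ) : Module.End ℂ (Fin d → ℂ) :=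
  Matrix.toLinAlgEquiv' M

lemma endo_apply (M : Matrix (Fin d) (Fin d) ℂ) (v : Fin d → ℂ) :
    endo M v = M.mulVec v :=
  Matrix.toLinAlgEquiv'_apply M v

lemma endo_pow (M : Matrix (Fin d) (Fin d) ℂ) (k : ℕ) :
    endo (M ^ k) = (endo M) ^ k :=
  map_pow (Matrix.toLinAlgEquiv' (R := ℂ) (n := Fin d)) M k

lemma trace_endo (M : Matrix (Fin d) (Fin d) ℂ) :
    LinearMap.trace ℂ _ (endo M) = M.trace := by
  rw [endo, LinearMap.trace_eq_matrix_trace ℂ (Pi.basisFun ℂ (Fin d)),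
    LinearMap.toMatrix_eq_toMatrix']
  congr 1
  exact LinearMap.toMatrix'_toLin' M

/-- Generalized eigenspace of a matrix. -/
abbrev espace (M : Matrix (Fin d) (Fin d) ℂ) (μ : ℂ) : Submodule ℂ (Fin d → ℂ) :=
  (endo M).maxGenEigenspace μ

lemma finite_eigs (M : Matrix (Fin d) (Fin d) ℂ) :
    {μ : ℂ | espace M μ ≠ ⊥}.Finite :=
  WellFoundedGT.finite_ne_bot_of_iSupIndep (endo M).independent_maxGenEigenspace

/-- The finite set of (generalized) eigenvalues of a matrix. -/
def eigs (M : Matrix (Fin d) (Fin d) ℂ) : Finset ℂ :=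
  (finite_eigs M).toFinset

lemma mem_eigs {M : Matrix (Fin d) (Fin d) ℂ} {μ : ℂ} :
    μ ∈ eigs M ↔ espace M μ ≠ ⊥ := by
  simp [eigs, Set.Finite.mem_toFinset]

/-- The Hankel matrix of power traces. -/
def tpm (M : Matrix (Fin d) (Fin d) ℂ) : Matrix (Fin d) (Fin d) ℂ :=
  Matrix.of fun i j => (M ^ ((i : ℕ) + (j : ℕ))).trace

/-- Discriminant-like invariant: the determinant of the matrix of power traces. -/
def disc (M : Matrix (Fin d) (Fin d) ℂ) : ℂ :=
  (tpm M).det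

lemma trace_restrict_pow (M : Matrix (Fin d) (Fin d) ℂ) (μ : ℂ) (k : ℕ)
    (h : MapsTo ((endo M) ^ k) (espace M μ) (espace M μ)) :
    LinearMap.trace ℂ _ (((endo M) ^ k).restrict h) =
      μ ^ k * (finrank ℂ (espace M μ) : ℂ) := by
  set f := endo M with hf
  have hres : ∀ x ∈ (f.maxGenEigenspace μ), f x ∈ (f.maxGenEigenspace μ) :=
    f.mapsTo_maxGenEigenspace_of_comm rfl μ
  have hpow : ((f ^ k).restrict h) = (f.restrict hres) ^ k :=
    (Module.End.pow_restrict k hres).symm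
  rw [hpow]
  set g := f.restrict hres with hg
  set x : Module.End ℂ (espace M μ) := algebraMap ℂ _ μ with hx
  set y : Module.End ℂ (espace M μ) := g - x with hy
  have hnil : IsNilpotent y := by
    have hmt : MapsTo ⇑(f - algebraMap ℂ _ μ) (f.maxGenEigenspace μ) (f.maxGenEigenspace μ) :=
      f.mapsTo_maxGenEigenspace_of_comm (Algebra.mul_sub_algebraMap_commutes f μ) μ
    have h1 := f.isNilpotent_restrict_maxGenEigenspace_sub_algebraMap μ hmt
    have h2 : y = (f - algebraMap ℂ _ μ).restrict hmt := by
      refine LinearMap.ext fun v => Subtype.ext ?_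
      simp [hy, hg, hx, LinearMap.restrict_coe_apply, LinearMap.sub_apply,
        Module.algebraMap_end_apply]
      change _ = f ↑v - (algebraMap ℂ (Module.End ℂ (Fin d → ℂ)) μ) ↑v
      rw [Module.algebraMap_end_apply]
    rw [h2]
    exact h1
  have hcomm : Commute x y := Algebra.commutes μ y
  have hgxy : g = x + y := by rw [hy]; abel
  rw [hgxy, Commute.add_pow hcomm k, map_sum]
  have hterm : ∀ i ∈ Finset.range k,
      LinearMap.trace ℂ _ (x ^ i * y ^ (k - i) * ((k.choose i : ℕ) : Module.End ℂ (espace M μ)))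
        = 0 := by
    intro i hi
    have hki : k - i ≠ 0 := Nat.sub_ne_zero_of_lt (Finset.mem_range.mp hi)
    have hynil : IsNilpotent (y ^ (k - i)) := hnil.pow_of_pos hki
    have h1 : x ^ i * y ^ (k - i) * ((k.choose i : ℕ) : Module.End ℂ (espace M μ))
        = (μ ^ i) • ((k.choose i) • (y ^ (k - i))) := by
      rw [hx, ← map_pow, ← Algebra.smul_def, smul_mul_assoc]
      congr 1
      rw [(Nat.cast_commute (k.choose i) (y ^ (k - i))).symm.eq, nsmul_eq_mul]
    rw [h1, map_smul, map_nsmul]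
    have h0 := (LinearMap.isNilpotent_trace_of_isNilpotent hynil).eq_zero
    rw [h0]
    simp
  rw [Finset.sum_range_succ, Finset.sum_eq_zero hterm, zero_add]
  have h2 : x ^ k * y ^ (k - k) * ((k.choose k : ℕ) : Module.End ℂ (espace M μ))
      = (μ ^ k) • (1 : Module.End ℂ (espace M μ)) := by
    simp [hx, ← map_pow, Nat.choose_self, Algebra.algebraMap_eq_smul_one, smul_pow, one_pow]
  rw [h2, map_smul, LinearMap.trace_one]
  simp

lemma trace_pow (M : Matrix (Fin d) (Fin d) ℂ) (k : ℕ) :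
    (M ^ k).trace = ∑ μ ∈ eigs M, (finrank ℂ (espace M μ) : ℂ) * μ ^ k := by
  classical
  have hInt : DirectSum.IsInternal (fun μ : ℂ => espace M μ) :=
    DirectSum.isInternal_submodule_of_iSupIndep_of_iSup_eq_top
      (endo M).independent_maxGenEigenspace (endo M).iSup_maxGenEigenspace_eq_top
  have hmt : ∀ μ : ℂ, MapsTo ⇑((endo M) ^ k) ↑(espace M μ) ↑(espace M μ) := fun μ =>
    (endo M).mapsTo_maxGenEigenspace_of_comm ((Commute.refl (endo M)).pow_right k) μ
  rw [← trace_endo (M ^ k), endo_pow,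
    LinearMap.trace_eq_sum_trace_restrict' hInt (finite_eigs M) hmt]
  refine Finset.sum_congr rfl fun μ _ => ?_
  rw [trace_restrict_pow M μ k (hmt μ)]
  ring

lemma card_eigs_le (M : Matrix (Fin d) (Fin d) ℂ) : (eigs M).card ≤ d := by
  classical
  letI inst1 : Fintype ↥{μ : ℂ | espace M μ ≠ ⊥} := (finite_eigs M).fintype
  letI inst2 : Fintype {μ : ℂ // espace M μ ≠ ⊥} := inst1
  have h1 : (eigs M).card = Fintype.card ↥{μ : ℂ | espace M μ ≠ ⊥} :=
    Set.Finite.card_toFinset _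
  have h2 : Fintype.card {μ : ℂ // espace M μ ≠ ⊥} ≤ finrank ℂ (Fin d → ℂ) :=
    iSupIndep.subtype_ne_bot_le_finrank (endo M).independent_maxGenEigenspace
  have h3 : finrank ℂ (Fin d → ℂ) = d := Module.finrank_fin_fun ℂ
  have h12 : Fintype.card ↥{μ : ℂ | espace M μ ≠ ⊥} = Fintype.card {μ : ℂ // espace M μ ≠ ⊥} :=
    rfl
  omega

lemma card_eigs_of_disc_ne (M : Matrix (Fin d) (Fin d) ℂ) (h : disc M ≠ 0) :
    (eigs M).card = d := by
  classical
  refine le_antisymm (card_eigs_le M) ?_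
  by_contra hlt
  push_neg at hlt
  apply h
  set A : Matrix (Fin d) ↥(eigs M) ℂ :=
    Matrix.of fun i μ => (finrank ℂ (espace M (μ : ℂ)) : ℂ) * (μ : ℂ) ^ (i : ℕ) with hA
  set B : Matrix ↥(eigs M) (Fin d) ℂ :=
    Matrix.of fun μ j => (μ : ℂ) ^ (j : ℕ) with hB
  have hAB : tpm M = A * B := by
    ext i j
    simp only [tpm, Matrix.of_apply]
    rw [trace_pow M ((i : ℕ) + (j : ℕ)), Matrix.mul_apply, ← Finset.sum_coe_sort (eigs M)]
    refine Finset.sum_congr rfl fun μ _ => ?_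
    simp only [hA, hB, Matrix.of_apply, pow_add]
    ring
  have hrank : (tpm M).rank ≤ (eigs M).card := by
    rw [hAB]
    calc (A * B).rank ≤ A.rank := Matrix.rank_mul_le_left A B
      _ ≤ Fintype.card ↥(eigs M) := Matrix.rank_le_card_width A
      _ = (eigs M).card := Fintype.card_coe _
  by_contra hdet
  have hunit : IsUnit (tpm M) := (Matrix.isUnit_iff_isUnit_det _).mpr (isUnit_iff_ne_zero.mpr hdet)
  have hr := Matrix.rank_of_isUnit _ hunit
  rw [hr, Fintype.card_fin] at hrank
  omega

lemma disc_ne_of_card_eigs (M : Matrix (Fin d) (Fin d) ℂ) (h : (eigs M).card = d) :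
    disc M ≠ 0 := by
  classical
  set e : ↥(eigs M) ≃ Fin d := Finset.equivFinOfCardEq h with he
  set ν : Fin d → ℂ := fun l => ((e.symm l : ℂ)) with hν
  have hνinj : Function.Injective ν := fun a b hab => e.symm.injective (Subtype.ext hab)
  set nn : Fin d → ℂ := fun l => (finrank ℂ (espace M (ν l)) : ℂ) with hnn
  have hnnne : ∀ l, nn l ≠ 0 := by
    intro l
    have hmem : espace M (ν l) ≠ ⊥ := mem_eigs.mp (e.symm l).2
    have hnt : Nontrivial ↥(espace M (ν l)) := Submodule.nontrivial_iff_ne_bot.mpr hmem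
    have hpos : 0 < finrank ℂ ↥(espace M (ν l)) := finrank_pos_iff.mpr hnt
    exact Nat.cast_ne_zero.mpr hpos.ne'
  have hfac : tpm M = ((Matrix.vandermonde ν).transpose * Matrix.diagonal nn) * Matrix.vandermonde ν := by
    ext i j
    simp only [tpm, Matrix.of_apply]
    rw [trace_pow M ((i : ℕ) + (j : ℕ)), ← Finset.sum_coe_sort (eigs M),
      ← Equiv.sum_comp e.symm
        (fun μ : ↥(eigs M) => (finrank ℂ (espace M (μ : ℂ)) : ℂ) * (μ : ℂ) ^ ((i : ℕ) + (j : ℕ))),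
      Matrix.mul_apply]
    refine Finset.sum_congr rfl fun l _ => ?_
    rw [Matrix.mul_diagonal]
    simp only [Matrix.transpose_apply, Matrix.vandermonde_apply]
    rw [pow_add]
    ring
  have hvdet : (Matrix.vandermonde ν).det ≠ 0 := by
    rw [Matrix.det_vandermonde]
    refine Finset.prod_ne_zero_iff.mpr fun i _ => ?_
    refine Finset.prod_ne_zero_iff.mpr fun j hj => ?_
    have hij : i ≠ j := fun hij => by
      subst hij
      exact absurd (Finset.mem_Ioi.mp hj) (lt_irrefl i)
    exact sub_ne_zero.mpr fun hc => hij (hνinj hc.symm)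
  simp only [disc]
  rw [hfac, Matrix.det_mul, Matrix.det_mul, Matrix.det_transpose, Matrix.det_diagonal]
  exact mul_ne_zero (mul_ne_zero hvdet (Finset.prod_ne_zero_iff.mpr fun l _ => hnnne l)) hvdet

lemma exists_eigenbasis (M : Matrix (Fin d) (Fin d) ℂ) (hd : 0 < d)
    (h : (eigs M).card = d) :
    ∃ (b : Basis (Fin d) ℂ (Fin d → ℂ)) (μ : Fin d → ℂ),
      Function.Injective μ ∧ ∀ i, M.mulVec (b i) = μ i • b i := by
  classical
  haveI : Nonempty (Fin d) := ⟨⟨0, hd⟩⟩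
  set e : ↥(eigs M) ≃ Fin d := Finset.equivFinOfCardEq h with he
  set μ : Fin d → ℂ := fun l => ((e.symm l : ℂ)) with hμ
  have hμinj : Function.Injective μ := fun a b hab => e.symm.injective (Subtype.ext hab)
  have heval : ∀ l, (endo M).HasEigenvalue (μ l) := by
    intro l
    have hmem : espace M (μ l) ≠ ⊥ := mem_eigs.mp (e.symm l).2
    have h1 : (endo M).HasUnifEigenvalue (μ l) ⊤ := hmem
    exact h1.lt zero_lt_one
  choose v hv using fun l => (heval l).exists_hasEigenvector
  have hli : LinearIndependent ℂ v :=
    (endo M).eigenvectors_linearIndependent' μ hμinj v hv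
  have hcard : Fintype.card (Fin d) = finrank ℂ (Fin d → ℂ) := by
    rw [Fintype.card_fin, Module.finrank_fin_fun]
  refine ⟨basisOfLinearIndependentOfCardEqFinrank hli hcard, μ, hμinj, fun i => ?_⟩
  rw [coe_basisOfLinearIndependentOfCardEqFinrank, ← endo_apply]
  exact (hv i).apply_eq_smul

lemma card_eigs_of_eigenbasis (M : Matrix (Fin d) (Fin d) ℂ)
    (b : Basis (Fin d) ℂ (Fin d → ℂ)) (μ : Fin d → ℂ) (hμ : Function.Injective μ)
    (heig : ∀ i, M.mulVec (b i) = μ i • b i) : (eigs M).card = d := by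
  classical
  refine le_antisymm (card_eigs_le M) ?_
  have hsub : Finset.image μ Finset.univ ⊆ eigs M := by
    intro x hx
    obtain ⟨i, _, rfl⟩ := Finset.mem_image.mp hx
    have hev : (endo M).HasEigenvalue (μ i) := by
      apply Module.End.hasEigenvalue_of_hasEigenvector (x := b i)
      constructor
      · rw [Module.End.mem_eigenspace_iff, endo_apply, heig i]
      · exact b.ne_zero i
    have h2 : (endo M).HasUnifEigenvalue (μ i) ⊤ := hev.le le_top
    exact mem_eigs.mpr h2
  calc d = (Finset.image μ Finset.univ).card := by
        rw [Finset.card_image_of_injective _ hμ, Finset.card_univ, Fintype.card_fin]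
    _ ≤ (eigs M).card := Finset.card_le_card hsub

lemma mulVec_sumv {ι : Type*} (s : Finset ι) (M : Matrix (Fin d) (Fin d) ℂ)
    (g : ι → Fin d → ℂ) : M.mulVec (∑ j ∈ s, g j) = ∑ j ∈ s, M.mulVec (g j) := by
  classical
  induction s using Finset.cons_induction with
  | empty => simp [Matrix.mulVec_zero]
  | cons a s ha ih => rw [Finset.sum_cons, Finset.sum_cons, Matrix.mulVec_add, ih]

lemma sum_mulVec {ι : Type*} (s : Finset ι) (A : ι → Matrix (Fin d) (Fin d) ℂ)
    (v : Fin d → ℂ) : (∑ k ∈ s, A k).mulVec v = ∑ k ∈ s, (A k).mulVec v := by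
  classical
  induction s using Finset.cons_induction with
  | empty => simp [Matrix.zero_mulVec]
  | cons a s ha ih => rw [Finset.sum_cons, Finset.sum_cons, Matrix.add_mulVec, ih]

/-- If a subalgebra contains a matrix with an eigenbasis with pairwise distinct
eigenvalues and commutes with it, then it has simple spectrum. -/
lemma hasSimpleSpectrum_of_mem {S : Subalgebra ℂ (Matrix (Fin d) (Fin d) ℂ)}
    {M : Matrix (Fin d) (Fin d) ℂ} (hM : M ∈ S)
    (hc : ∀ a ∈ S, a * M = M * a)
    (b : Basis (Fin d) ℂ (Fin d → ℂ)) (μ : Fin d → ℂ) (hμ : Function.Injective μ)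
    (heig : ∀ i, M.mulVec (b i) = μ i • b i) : HasSimpleSpectrum S := by
  classical
  have key : ∀ (a : S) (i : Fin d),
      (a : Matrix (Fin d) (Fin d) ℂ).mulVec (b i)
        = (b.repr ((a : Matrix (Fin d) (Fin d) ℂ).mulVec (b i)) i) • b i := by
    intro a i
    set w := (a : Matrix (Fin d) (Fin d) ℂ).mulVec (b i) with hw
    set c : Fin d → ℂ := fun j => b.repr w j with hcdef
    have hMw : M.mulVec w = μ i • w := by
      rw [hw, Matrix.mulVec_mulVec, ← hc (a : Matrix (Fin d) (Fin d) ℂ) a.2,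
        ← Matrix.mulVec_mulVec, heig i, Matrix.mulVec_smul]
    have hrepr : ∑ j, c j • b j = w := b.sum_repr w
    have hMw2 : M.mulVec w = ∑ j, (μ j * c j) • b j := by
      conv_lhs => rw [← hrepr]
      rw [mulVec_sumv Finset.univ M (fun j => c j • b j)]
      refine Finset.sum_congr rfl fun j _ => ?_
      rw [Matrix.mulVec_smul, heig j, smul_smul, mul_comm]
    have hMw3 : μ i • w = ∑ j, (μ i * c j) • b j := by
      conv_lhs => rw [← hrepr]
      rw [Finset.smul_sum]
      refine Finset.sum_congr rfl fun j _ => ?_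
      rw [smul_smul]
    have hsum : ∑ j, ((μ j * c j) - (μ i * c j)) • b j = 0 := by
      simp_rw [sub_smul]
      rw [Finset.sum_sub_distrib, ← hMw2, ← hMw3, hMw, sub_self]
    have hcoef := Fintype.linearIndependent_iff.mp b.linearIndependent _ hsum
    have hzero : ∀ j, j ≠ i → c j = 0 := by
      intro j hj
      have hj2 := hcoef j
      have hfac : (μ j - μ i) * c j = 0 := by linear_combination hj2
      rcases mul_eq_zero.mp hfac with h1 | h1
      · exact absurd (hμ (sub_eq_zero.mp h1)) hj
      · exact h1
    calc w = ∑ j, c j • b j := hrepr.symm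
      _ = c i • b i := by
          refine Finset.sum_eq_single i (fun j _ hj => ?_) (by simp)
          rw [hzero j hj, zero_smul]
  refine ⟨b, fun i a => b.repr ((a : Matrix (Fin d) (Fin d) ℂ).mulVec (b i)) i,
    fun a i => key a i, ?_⟩
  intro i j hij
  have hMn : ∀ l : Fin d,
      b.repr (((⟨M, hM⟩ : S) : Matrix (Fin d) (Fin d) ℂ).mulVec (b l)) l = μ l := by
    intro l
    show b.repr (M.mulVec (b l)) l = μ l
    rw [heig l, map_smul]
    simp [Basis.repr_self]
  apply hμ
  rw [← hMn i, ← hMn j]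
  exact congrFun hij (⟨M, hM⟩ : S)

end

end Stmt17Aux

theorem stmt17 {d m : ℕ}
    (T : ℂ → Fin m → Matrix (Fin d) (Fin d) ℂ)
    (hT : Continuous T)
    (hcomm : ∀ (t : ℂ) (i j : Fin m), T t i * T t j = T t j * T t i)
    (h0 : HasSimpleSpectrum (Algebra.adjoin ℂ (Set.range (T 0)))) :
    ∀ᶠ t in nhdsWithin (0 : ℂ) {0}ᶜ,
      HasSimpleSpectrum (Algebra.adjoin ℂ (Set.range (T t))) := by
  classical
  rcases Nat.eq_zero_or_pos d with hd0 | hd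
  · subst hd0
    refine Filter.Eventually.of_forall fun t => ?_
    haveI : Subsingleton (Fin 0 → ℂ) := ⟨fun a b => funext fun x => x.elim0⟩
    exact ⟨Module.Basis.empty _, fun i => i.elim0, fun a i => i.elim0, fun i j _ => i.elim0⟩
  obtain ⟨b0, χ0, hb0, hχ0⟩ := h0
  have hval : ∀ (x : Matrix (Fin d) (Fin d) ℂ)
      (hx : x ∈ Algebra.adjoin ℂ (Set.range (T 0))) (i : Fin d) (c : ℂ),
      x.mulVec (b0 i) = c • b0 i → χ0 i ⟨x, hx⟩ = c := by
    intro x hx i c h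
    have h2 := hb0 ⟨x, hx⟩ i
    rw [h] at h2
    exact smul_left_injective ℂ (b0.ne_zero i) h2.symm
  set w : Fin d → Fin m → ℂ :=
    fun i k => χ0 i ⟨T 0 k, Algebra.subset_adjoin (Set.mem_range_self k)⟩ with hwdef
  have hw : Function.Injective w := by
    intro i j hij
    apply hχ0
    funext a
    obtain ⟨x, hx⟩ := a
    show χ0 i ⟨x, hx⟩ = χ0 j ⟨x, hx⟩
    induction hx using Algebra.adjoin_induction with
    | mem x hx' =>
      obtain ⟨k, rfl⟩ := hx'
      exact congrFun hij k
    | algebraMap r =>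
      have hmv : ∀ l : Fin d,
          (algebraMap ℂ (Matrix (Fin d) (Fin d) ℂ) r).mulVec (b0 l) = r • b0 l := by
        intro l
        rw [Algebra.algebraMap_eq_smul_one, Matrix.smul_mulVec, Matrix.one_mulVec]
      exact (hval _ _ i r (hmv i)).trans (hval _ _ j r (hmv j)).symm
    | add x y hx hy ihx ihy =>
      have haddmv : ∀ l : Fin d,
          (x + y).mulVec (b0 l) = (χ0 l ⟨x, hx⟩ + χ0 l ⟨y, hy⟩) • b0 l := by
        intro l
        rw [Matrix.add_mulVec, hb0 ⟨x, hx⟩ l, hb0 ⟨y, hy⟩ l, add_smul]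
      refine (hval _ _ i _ (haddmv i)).trans ?_
      rw [ihx, ihy]
      exact (hval _ _ j _ (haddmv j)).symm
    | mul x y hx hy ihx ihy =>
      have hmulmv : ∀ l : Fin d,
          (x * y).mulVec (b0 l) = (χ0 l ⟨x, hx⟩ * χ0 l ⟨y, hy⟩) • b0 l := by
        intro l
        rw [← Matrix.mulVec_mulVec, hb0 ⟨y, hy⟩ l, Matrix.mulVec_smul, hb0 ⟨x, hx⟩ l,
          smul_smul, mul_comm]
      refine (hval _ _ i _ (hmulmv i)).trans ?_
      rw [ihx, ihy]
      exact (hval _ _ j _ (hmulmv j)).symm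
  -- choose a generic linear combination separating the characters
  set q : Fin d → Fin d → Polynomial ℂ :=
    fun i j => ∑ k : Fin m, Polynomial.C (w i k - w j k) * Polynomial.X ^ (k : ℕ) with hqdef
  have hqne : ∀ i j, i ≠ j → q i j ≠ 0 := by
    intro i j hij hq0
    have hwk : ∃ k, w i k ≠ w j k := by
      by_contra hall
      push_neg at hall
      exact hij (hw (funext hall))
    obtain ⟨k₀, hk₀⟩ := hwk
    have hcoeff : (q i j).coeff (k₀ : ℕ) = w i k₀ - w j k₀ := by
      rw [hqdef]
      simp only []
      rw [Polynomial.finset_sum_coeff]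
      rw [Finset.sum_eq_single k₀]
      · rw [Polynomial.coeff_C_mul, Polynomial.coeff_X_pow, if_pos rfl, mul_one]
      · intro k _ hk
        have hne : ¬((k₀ : ℕ) = (k : ℕ)) := fun hceq => hk ((Fin.ext hceq).symm)
        rw [Polynomial.coeff_C_mul, Polynomial.coeff_X_pow, if_neg hne, mul_zero]
      · intro habs
        exact absurd (Finset.mem_univ k₀) habs
    rw [hq0, Polynomial.coeff_zero] at hcoeff
    exact hk₀ (sub_eq_zero.mp hcoeff.symm)
  have hpne : (∏ pr ∈ Finset.univ.offDiag, q pr.1 pr.2) ≠ 0 :=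
    Finset.prod_ne_zero_iff.mpr fun pr hpr => hqne pr.1 pr.2 (Finset.mem_offDiag.mp hpr).2.2
  have hex : ∃ s : ℂ, (∏ pr ∈ Finset.univ.offDiag, q pr.1 pr.2).eval s ≠ 0 := by
    by_contra hall
    push_neg at hall
    exact hpne (Polynomial.zero_of_eval_zero _ hall)
  obtain ⟨s, hs⟩ := hex
  have hqs : ∀ i j, i ≠ j → (q i j).eval s ≠ 0 := by
    intro i j hij
    rw [Polynomial.eval_prod] at hs
    exact Finset.prod_ne_zero_iff.mp hs (i, j)
      (Finset.mem_offDiag.mpr ⟨Finset.mem_univ _, Finset.mem_univ _, hij⟩)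
  have hqeval : ∀ i j, (q i j).eval s = ∑ k : Fin m, (w i k - w j k) * s ^ (k : ℕ) := by
    intro i j
    rw [hqdef]
    simp only []
    rw [Polynomial.eval_finset_sum]
    refine Finset.sum_congr rfl fun k _ => ?_
    simp
  set ν : Fin d → ℂ := fun i => ∑ k : Fin m, w i k * s ^ (k : ℕ) with hνdef
  have hν : Function.Injective ν := by
    intro i j hij
    by_contra hne
    apply hqs i j hne
    rw [hqeval]
    have hdiff : ∑ k : Fin m, (w i k - w j k) * s ^ (k : ℕ) = ν i - ν j := by
      rw [hνdef]
      simp only []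
      rw [← Finset.sum_sub_distrib]
      refine Finset.sum_congr rfl fun k _ => by ring
    rw [hdiff, hij, sub_self]
  set Mt : ℂ → Matrix (Fin d) (Fin d) ℂ := fun t => ∑ k : Fin m, s ^ (k : ℕ) • T t k with hMtdef
  have hMt0 : ∀ i, (Mt 0).mulVec (b0 i) = ν i • b0 i := by
    intro i
    rw [hMtdef]
    simp only []
    rw [Stmt17Aux.sum_mulVec]
    have hterm : ∀ k : Fin m,
        (s ^ (k : ℕ) • T 0 k).mulVec (b0 i) = (w i k * s ^ (k : ℕ)) • b0 i := by
      intro k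
      rw [Matrix.smul_mulVec,
        hb0 ⟨T 0 k, Algebra.subset_adjoin (Set.mem_range_self k)⟩ i, smul_smul, mul_comm]
    rw [Finset.sum_congr rfl fun k _ => hterm k, ← Finset.sum_smul]
  have hcard0 : (Stmt17Aux.eigs (Mt 0)).card = d :=
    Stmt17Aux.card_eigs_of_eigenbasis (Mt 0) b0 ν hν hMt0
  have hdisc0 : Stmt17Aux.disc (Mt 0) ≠ 0 := Stmt17Aux.disc_ne_of_card_eigs _ hcard0
  have hMc : Continuous Mt := by
    apply continuous_finset_sum
    intro k _
    exact (continuous_const : Continuous fun _ : ℂ => s ^ (k : ℕ)).smul ((continuous_apply k).comp hT)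
  have hpow : ∀ n : ℕ, Continuous fun t => (Mt t) ^ n := by
    intro n
    induction n with
    | zero => simpa [pow_zero] using continuous_const
    | succ n ih =>
      simp only [pow_succ]
      exact ih.matrix_mul hMc
  have hdc : Continuous fun t => Stmt17Aux.disc (Mt t) := by
    simp only [Stmt17Aux.disc, Stmt17Aux.tpm]
    apply Continuous.matrix_det
    apply continuous_matrix
    intro i j
    exact (hpow ((i : ℕ) + (j : ℕ))).matrix_trace
  have hev : ∀ᶠ t in nhds (0 : ℂ), Stmt17Aux.disc (Mt t) ≠ 0 :=
    hdc.continuousAt.eventually_ne hdisc0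
  refine (hev.filter_mono nhdsWithin_le_nhds).mono fun t ht => ?_
  obtain ⟨b, μ, hμinj, heig⟩ :=
    Stmt17Aux.exists_eigenbasis (Mt t) hd (Stmt17Aux.card_eigs_of_disc_ne _ ht)
  have hmem : Mt t ∈ Algebra.adjoin ℂ (Set.range (T t)) :=
    Subalgebra.sum_mem _ fun k _ =>
      Subalgebra.smul_mem _ (Algebra.subset_adjoin (Set.mem_range_self k)) _
  have hcent : ∀ a ∈ Algebra.adjoin ℂ (Set.range (T t)), ∀ k : Fin m,
      T t k * a = a * T t k := by
    have hle : Algebra.adjoin ℂ (Set.range (T t)) ≤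
        Subalgebra.centralizer ℂ (Set.range (T t)) := by
      apply Algebra.adjoin_le
      intro x hx
      show x ∈ Subalgebra.centralizer ℂ (Set.range (T t))
      rw [Subalgebra.mem_centralizer_iff]
      intro g hg
      obtain ⟨i, rfl⟩ := hg
      obtain ⟨j, rfl⟩ := hx
      exact hcomm t i j
    intro a ha k
    exact (Subalgebra.mem_centralizer_iff ℂ).mp (hle ha) (T t k) (Set.mem_range_self k)
  have hcM : ∀ a ∈ Algebra.adjoin ℂ (Set.range (T t)), a * Mt t = Mt t * a := by
    intro a ha
    rw [hMtdef]
    simp only []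
    rw [Finset.mul_sum, Finset.sum_mul]
    refine Finset.sum_congr rfl fun k _ => ?_
    rw [mul_smul_comm, smul_mul_assoc, hcent a ha k]
  exact Stmt17Aux.hasSimpleSpectrum_of_mem hmem hcM b μ hμinj heig
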